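/- Let K be a field, V a finite-dimensional vector space over K, W an arbitrary vector space over K, and V₀ ≤ V, W₀ ≤ W subspaces. Identify elements of V* ⊗ W with linear operators V → W via the canonical map dualTensorHom (λ ⊗ w ↦ (v ↦ λ(v)·w)), which is an isomorphism since V is finite-dimensional. Then for ξ ∈ V* ⊗ W, the operator dualTensorHom ξ maps V₀ into W₀ if and only if ξ lies in the subspace V₀^⊥ ⊗ W + V* ⊗ W₀ of V* ⊗ W (the sum of the images of the canonical maps V₀^⊥ ⊗ W → V* ⊗ W and V* ⊗ W₀ → V* ⊗ W). -/

import Mathlib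

open TensorProduct

private lemma dth_ann_zero {K V W : Type*} [Field K]
    [AddCommGroup V] [Module K V] [AddCommGroup W] [Module K W]
    (V₀ : Submodule K V)
    (t : V₀.dualAnnihilator ⊗[K] W) {v : V} (hv : v ∈ V₀) :
    dualTensorHom K V W
      (TensorProduct.map V₀.dualAnnihilator.subtype (LinearMap.id : W →ₗ[K] W) t) v = 0 := by
  induction t using TensorProduct.induction_on with
  | zero => simp
  | tmul f w =>
      simp only [TensorProduct.map_tmul, dualTensorHom_apply, LinearMap.id_coe, id_eq,
        Submodule.subtype_apply]
      rw [(Submodule.mem_dualAnnihilator _).mp f.2 v hv, zero_smul]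
  | add x y hx hy => simp [map_add, hx, hy]

private lemma dth_sub_mem {K V W : Type*} [Field K]
    [AddCommGroup V] [Module K V] [AddCommGroup W] [Module K W]
    (W₀ : Submodule K W)
    (t : Module.Dual K V ⊗[K] W₀) (v : V) :
    dualTensorHom K V W
      (TensorProduct.map (LinearMap.id : Module.Dual K V →ₗ[K] Module.Dual K V)
        W₀.subtype t) v ∈ W₀ := by
  induction t using TensorProduct.induction_on with
  | zero => simp
  | tmul f w =>
      simp only [TensorProduct.map_tmul, dualTensorHom_apply, LinearMap.id_coe, id_eq,
        Submodule.subtype_apply]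
      exact W₀.smul_mem _ w.2
  | add x y hx hy => simpa [map_add] using W₀.add_mem hx hy

/-- for `V` finite-dimensional, an element `ξ ∈ V* ⊗ W`, viewed as an
operator `V → W` via `dualTensorHom`, maps `V₀` into `W₀` if and only if
`ξ ∈ V₀^⊥ ⊗ W + V* ⊗ W₀`. -/
theorem dualTensorHom_maps_into_iff {K V W : Type*} [Field K]
    [AddCommGroup V] [Module K V] [FiniteDimensional K V]
    [AddCommGroup W] [Module K W]
    (V₀ : Submodule K V) (W₀ : Submodule K W) :
    ∀ ξ : Module.Dual K V ⊗[K] W,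
      (∀ v ∈ V₀, dualTensorHom K V W ξ v ∈ W₀)
        ↔ ξ ∈
          LinearMap.range
              (TensorProduct.map V₀.dualAnnihilator.subtype (LinearMap.id : W →ₗ[K] W))
            ⊔ LinearMap.range
                (TensorProduct.map
                  (LinearMap.id : Module.Dual K V →ₗ[K] Module.Dual K V)
                  W₀.subtype) := by
  intro ξ
  constructor
  · intro h
    -- choose a complement of V₀ and an adapted basis
    obtain ⟨V₁, hc⟩ := Submodule.exists_isCompl V₀
    let b₀ := Module.Free.chooseBasis K V₀
    let b₁ := Module.Free.chooseBasis K V₁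
    classical
    let e := Submodule.prodEquivOfIsCompl V₀ V₁ hc
    let b : Module.Basis (Module.Free.ChooseBasisIndex K V₀ ⊕ Module.Free.ChooseBasisIndex K V₁) K V :=
      (b₀.prod b₁).map e
    have hξ : ξ = ∑ i, b.dualBasis i ⊗ₜ[K] (dualTensorHom K V W ξ (b i)) := by
      apply (dualTensorHomEquivOfBasis (N := W) b).injective
      simp only [dualTensorHomEquivOfBasis_apply, map_sum]
      ext v
      simp only [LinearMap.sum_apply, dualTensorHom_apply, Module.Basis.coe_dualBasis,
        Module.Basis.coord_apply, ← (dualTensorHom K V W ξ).map_smul,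
        ← map_sum (dualTensorHom K V W ξ), b.sum_repr]
    rw [hξ]
    refine Submodule.sum_mem _ ?_
    rintro (i | j) -
    · -- b (inl i) ∈ V₀, so the W side lands in W₀
      have hb : b (Sum.inl i) ∈ V₀ := by
        simp only [b, Module.Basis.map_apply, Module.Basis.prod_apply]
        simp [e, Submodule.coe_prodEquivOfIsCompl']
      refine Submodule.mem_sup_right ⟨b.dualBasis (Sum.inl i) ⊗ₜ[K]
        ⟨dualTensorHom K V W ξ (b (Sum.inl i)), h _ hb⟩, ?_⟩
      simp
    · -- b.dualBasis (inr j) annihilates V₀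
      have hann : b.dualBasis (Sum.inr j) ∈ V₀.dualAnnihilator := by
        rw [Submodule.mem_dualAnnihilator]
        intro v hv
        have hrepr : (b.repr v) (Sum.inr j) = 0 := by
          have : e.symm v = (⟨v, hv⟩, 0) :=
            Submodule.prodEquivOfIsCompl_symm_apply_left V₀ V₁ hc (⟨v, hv⟩ : V₀)
          simp [b, Module.Basis.map_repr, this, Module.Basis.prod_repr_inr]
        simp only [Module.Basis.coe_dualBasis, Module.Basis.coord_apply]
        exact hrepr
      exact Submodule.mem_sup_left ⟨(⟨b.dualBasis (Sum.inr j), hann⟩ : V₀.dualAnnihilator)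
        ⊗ₜ[K] (dualTensorHom K V W ξ (b (Sum.inr j))), by simp⟩
  · intro hmem v hv
    rw [Submodule.mem_sup] at hmem
    obtain ⟨a, ⟨ta, rfl⟩, c, ⟨tc, rfl⟩, rfl⟩ := hmem
    rw [map_add, LinearMap.add_apply]
    have h1 := dth_ann_zero (W := W) V₀ ta hv
    have h2 := dth_sub_mem (V := V) W₀ tc v
    rw [h1, zero_add]
    exact h2
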